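/- The function Q(x) = 3^{1/4}/√(cosh(2x)) is positive and satisfies Q''(x) + Q(x)⁵ = Q(x) for every real x. -/

import Mathlib

theorem ground_state_quintic :
    let Q : ℝ → ℝ := fun x => (3 : ℝ) ^ ((1 : ℝ) / 4) / Real.sqrt (Real.cosh (2 * x))
    ∀ x : ℝ, 0 < Q x ∧ DifferentiableAt ℝ Q x ∧
      HasDerivAt (deriv Q) (Q x - Q x ^ 5) x := by
  intro Q
  set c : ℝ := (3:ℝ) ^ ((1:ℝ)/4) with hc
  have hcpos : 0 < c := Real.rpow_pos_of_pos (by norm_num) _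
  have hc5 : c ^ 5 = 3 * c := by
    rw [hc, ← Real.rpow_natCast ((3:ℝ) ^ ((1:ℝ)/4)) 5, ← Real.rpow_mul (by norm_num)]
    rw [show ((1:ℝ)/4) * ((5:ℕ):ℝ) = 1 + 1/4 by push_cast; ring,
      Real.rpow_add (by norm_num), Real.rpow_one]
  have hs : ∀ x : ℝ, 0 < Real.sqrt (Real.cosh (2*x)) := fun x =>
    Real.sqrt_pos.mpr (Real.cosh_pos (2*x))
  have hsq : ∀ x : ℝ, Real.sqrt (Real.cosh (2*x)) ^ 2 = Real.cosh (2*x) := fun x =>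
    Real.sq_sqrt (Real.cosh_pos (2*x)).le
  have hsqrtD : ∀ x : ℝ, HasDerivAt (fun x => Real.sqrt (Real.cosh (2*x)))
      (Real.sinh (2*x) / Real.sqrt (Real.cosh (2*x))) x := by
    intro x
    have h1 : HasDerivAt (fun x : ℝ => 2*x) 2 x := by
      simpa using (hasDerivAt_id x).const_mul 2
    have h2 : HasDerivAt (fun x : ℝ => Real.cosh (2*x)) (Real.sinh (2*x) * 2) x :=
      (Real.hasDerivAt_cosh (2*x)).comp x h1
    have h3 := (Real.hasDerivAt_sqrt (ne_of_gt (Real.cosh_pos (x := 2*x)))).comp x h2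
    refine h3.congr_deriv ?_
    have := (hs x).ne'
    field_simp
  set g : ℝ → ℝ := fun x => -c * Real.sinh (2*x) / Real.sqrt (Real.cosh (2*x)) ^ 3 with hg
  have hQ' : ∀ x : ℝ, HasDerivAt Q (g x) x := by
    intro x
    have h1 := (((hsqrtD x).inv (hs x).ne').const_mul c)
    have hQeq : Q = fun x => c * (Real.sqrt (Real.cosh (2*x)))⁻¹ := by
      funext y; simp [Q, hc, div_eq_mul_inv]
    rw [hQeq]
    have h2 : g x = c * (-(Real.sinh (2*x) / Real.sqrt (Real.cosh (2*x))) / Real.sqrt (Real.cosh (2*x)) ^ 2) := by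
      rw [hg]
      set s := Real.sqrt (Real.cosh (2*x)) with hs_def
      have hsx := (hs x).ne'
      rw [← hs_def] at hsx
      field_simp
      rw [← hs_def]
    rw [h2]; exact h1
  have hdQ : deriv Q = g := funext fun x => (hQ' x).deriv
  refine fun x => ⟨div_pos hcpos (hs x), (hQ' x).differentiableAt, ?_⟩
  rw [hdQ]
  -- derivative of g
  have hnum : HasDerivAt (fun x : ℝ => -c * Real.sinh (2*x)) (-c * (Real.cosh (2*x) * 2)) x := by
    have h1 : HasDerivAt (fun x : ℝ => 2*x) 2 x := by
      simpa using (hasDerivAt_id x).const_mul 2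
    exact ((Real.hasDerivAt_sinh (2*x)).comp x h1).const_mul (-c)
  have hden : HasDerivAt (fun x : ℝ => Real.sqrt (Real.cosh (2*x)) ^ 3)
      (3 * Real.sqrt (Real.cosh (2*x)) ^ 2 * (Real.sinh (2*x) / Real.sqrt (Real.cosh (2*x)))) x := by
    have := (hsqrtD x).fun_pow 3
    refine this.congr_deriv ?_
    norm_num
  have hden_ne : Real.sqrt (Real.cosh (2*x)) ^ 3 ≠ 0 := pow_ne_zero _ (hs x).ne'
  have hgD := hnum.div hden hden_ne
  refine hgD.congr_deriv ?_
  symm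
  have hsx := (hs x).ne'
  have hsinh : Real.sinh (2*x) ^ 2 = Real.cosh (2*x) ^ 2 - 1 := by
    have := Real.cosh_sq_sub_sinh_sq (2*x); nlinarith
  have hcosh : Real.cosh (2*x) = Real.sqrt (Real.cosh (2*x)) ^ 2 := (hsq x).symm
  simp only [Q]
  rw [← hc]
  set s := Real.sqrt (Real.cosh (2*x)) with hs_def
  have hsx : s ≠ 0 := (hs x).ne'
  have hcosh' : Real.cosh (2*x) = s ^ 2 := hcosh
  have hsinh' : Real.sinh (2*x) ^ 2 = s ^ 4 - 1 := by
    rw [hsinh, hcosh']; ring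
  rw [hcosh']
  field_simp
  linear_combination (-3) * hsinh' - (mul_left_cancel₀ hcpos.ne' (by linear_combination hc5 : c * c^4 = c * 3))
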